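/- Let k be a field of characteristic ≠ 2, (P, ⊥) a poset with an order-reversing involution, and let ψ₁, ψ₂ be indecomposable linear representations of P in finite-dimensional k-vector spaces V₁, V₂. Then ψ₁ is isomorphic to ψ₂ or to the dual ψ₂* if and only if the symplectifications ψ₁⁻ and ψ₂⁻ are isomorphic as symplectic representations, i.e. there is a linear isomorphism F : V₁* × V₁ → V₂* × V₂ with Ω₂(F a, F b) = Ω₁(a, b) for all a, b and F(ψ₁⁻(p)) = ψ₂⁻(p) for all p ∈ P. -/

import Mathlib

open Polynomial

/-- The canonical symplectic form `Ω((ξ, x), (η, y)) = ξ(y) − η(x)` on `V* × V`. -/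
noncomputable def OmegaForm (k V : Type*) [Field k] [AddCommGroup V] [Module k V] :
    LinearMap.BilinForm k (Module.Dual k V × V) :=
  ((Module.dualPairing k V).compl₁₂
      (LinearMap.fst k (Module.Dual k V) V) (LinearMap.snd k (Module.Dual k V) V)) -
  ((Module.dualPairing k V).compl₁₂
      (LinearMap.fst k (Module.Dual k V) V) (LinearMap.snd k (Module.Dual k V) V)).flip

theorem OmegaForm_apply {k V : Type*} [Field k] [AddCommGroup V] [Module k V]
    (a b : Module.Dual k V × V) : OmegaForm k V a b = a.1 b.2 - b.1 a.2 := rfl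


open Polynomial

section Aux
variable {k V : Type*} [Field k] [AddCommGroup V] [Module k V] {P : Type*}

/-- An idempotent endomorphism preserving an indecomposable representation is 0 or 1. -/
theorem idem_trivial (ψ : P → Submodule k V)
    (hindec : ∀ U' U'' : Submodule k V, IsCompl U' U'' →
      (∀ p, ψ p = (ψ p ⊓ U') ⊔ (ψ p ⊓ U'')) → U' = ⊥ ∨ U'' = ⊥)
    (e : V →ₗ[k] V) (he : ∀ x, e (e x) = e x)
    (hp : ∀ p, ∀ x ∈ ψ p, e x ∈ ψ p) : e = 0 ∨ e = LinearMap.id := by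
  have hker : ∀ x : V, e (x - e x) = 0 := fun x => by simp [map_sub, he x]
  have hcompl : IsCompl (LinearMap.range e) (LinearMap.ker e) := by
    constructor
    · rw [disjoint_iff, eq_bot_iff]
      rintro x ⟨⟨y, rfl⟩, hx⟩
      have h0 : e (e y) = 0 := hx
      rw [he y] at h0
      simp [h0]
    · rw [codisjoint_iff, eq_top_iff]
      intro x _
      have hx : x = e x + (x - e x) := by abel
      rw [hx]
      exact Submodule.add_mem_sup ⟨x, rfl⟩ (hker x)
  have hdec : ∀ p, ψ p = (ψ p ⊓ LinearMap.range e) ⊔ (ψ p ⊓ LinearMap.ker e) := by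
    intro p
    refine le_antisymm (fun x hx => ?_) (sup_le inf_le_left inf_le_left)
    have hx' : x = e x + (x - e x) := by abel
    rw [hx']
    exact Submodule.add_mem_sup ⟨hp p x hx, ⟨x, rfl⟩⟩
      ⟨sub_mem hx (hp p x hx), hker x⟩
  rcases hindec _ _ hcompl hdec with h | h
  · left
    ext x
    have : e x ∈ LinearMap.range e := ⟨x, rfl⟩
    rw [h] at this
    simpa using this
  · right
    have hinj : Function.Injective e := by
      rw [← LinearMap.ker_eq_bot] at *; exact h
    ext x
    exact hinj (he x)

/-- Polynomials in a representation endomorphism preserve the representation. -/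
theorem aeval_preserve (ψ : P → Submodule k V) (u : V →ₗ[k] V)
    (hu : ∀ p, ∀ x ∈ ψ p, u x ∈ ψ p) (f : k[X]) (p : P) :
    ∀ x ∈ ψ p, (Polynomial.aeval u f) x ∈ ψ p := by
  induction f using Polynomial.induction_on' with
  | add f g hf hg =>
    intro x hx
    rw [map_add, LinearMap.add_apply]
    exact add_mem (hf x hx) (hg x hx)
  | monomial n a =>
    intro x hx
    have hpow : ∀ m : ℕ, (u ^ m) x ∈ ψ p := by
      intro m
      induction m with
      | zero => simpa using hx
      | succ m ih => rw [pow_succ', Module.End.mul_apply]; exact hu p _ ih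
    rw [Polynomial.aeval_monomial]
    have : ((algebraMap k (Module.End k V)) a * u ^ n) x = a • ((u ^ n) x) := by
      rw [Module.End.mul_apply, Module.algebraMap_end_apply]
    rw [this]
    exact Submodule.smul_mem _ _ (hpow n)

end Aux
section Aux
variable {k V : Type*} [Field k] [AddCommGroup V] [Module k V] {P : Type*}
variable [FiniteDimensional k V]

theorem nilpotent_of_not_inj (ψ : P → Submodule k V)
    (hindec : ∀ U' U'' : Submodule k V, IsCompl U' U'' →
      (∀ p, ψ p = (ψ p ⊓ U') ⊔ (ψ p ⊓ U'')) → U' = ⊥ ∨ U'' = ⊥)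
    (u : V →ₗ[k] V) (hu : ∀ p, ∀ x ∈ ψ p, u x ∈ ψ p)
    (hninj : ¬ Function.Injective u) : ∃ n : ℕ, u ^ n = 0 := by
  set m := minpoly k u with hm
  have hm0 : m ≠ 0 := minpoly.ne_zero_of_finite k u
  -- the constant coefficient of m vanishes
  obtain ⟨x, hxk, hx0⟩ := (Submodule.ne_bot_iff _).mp
    (by rwa [ne_eq, LinearMap.ker_eq_bot] : LinearMap.ker u ≠ ⊥)
  have hux : u x = 0 := hxk
  have hae := minpoly.aeval k u
  have hcoeff : m.coeff 0 = 0 := by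
    have h0 : (Polynomial.aeval u m) x = 0 := by rw [← hm] at hae; rw [hae]; rfl
    have hsplit : m.divX * X + C (m.coeff 0) = m := Polynomial.divX_mul_X_add m
    rw [← hsplit, map_add, map_mul, aeval_X, aeval_C, LinearMap.add_apply,
      Module.End.mul_apply, hux, map_zero, zero_add, Module.algebraMap_end_apply] at h0
    exact (smul_eq_zero.mp h0).resolve_right hx0
  set a := m.rootMultiplicity 0 with haDef
  have ha : 0 < a := (Polynomial.rootMultiplicity_pos hm0).mpr
    (by rw [Polynomial.IsRoot, ← Polynomial.coeff_zero_eq_eval_zero, hcoeff])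
  obtain ⟨g, hfac, hndvd⟩ := m.exists_eq_pow_rootMultiplicity_mul_and_not_dvd hm0 0
  rw [C_0, sub_zero] at hfac hndvd
  rw [← haDef] at hfac
  have hg0 : g ≠ 0 := fun h => hm0 (by rw [hfac, h, mul_zero])
  have hcop : IsCoprime ((X : k[X]) ^ a) g :=
    ((Polynomial.irreducible_X.coprime_iff_not_dvd).mpr hndvd).pow_left
  obtain ⟨c, d, hbez⟩ := hcop
  set π := Polynomial.aeval u (d * g) with hπ
  have key : (d * g) * (d * g) = d * g - c * d * m := by
    rw [hfac]; linear_combination (d * g) * hbez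
  have hmz : Polynomial.aeval u m = 0 := hae
  have hcdm : Polynomial.aeval u (c * d * m) = 0 := by rw [map_mul, hmz, mul_zero]
  have hππ : π * π = π := by
    rw [hπ, ← map_mul, key, map_sub, hcdm, sub_zero]
  have he : ∀ y, π (π y) = π y := fun y => by
    rw [← Module.End.mul_apply, hππ]
  rcases idem_trivial ψ hindec π he (fun p y hy => aeval_preserve ψ u hu (d * g) p y hy)
    with h0 | h1
  · -- π = 0 : contradiction
    exfalso
    have hdvd : minpoly k u ∣ d * g := minpoly.dvd k u (by rw [← hπ]; exact h0)
    rw [← hm, hfac] at hdvd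
    have hXd : (X : k[X]) ^ a ∣ d := (mul_dvd_mul_iff_right hg0).mp hdvd
    have hd0 : d.coeff 0 = 0 :=
      Polynomial.X_dvd_iff.mp (dvd_trans (dvd_pow_self X ha.ne') hXd)
    have := congrArg (Polynomial.eval 0) hbez
    simp [Polynomial.eval_mul, Polynomial.eval_pow, zero_pow ha.ne',
      ← Polynomial.coeff_zero_eq_eval_zero, hd0] at this
  · -- π = 1 : u is nilpotent
    have hz : Polynomial.aeval u (d * g - 1) = 0 := by
      rw [map_sub, map_one, ← hπ, h1, Module.End.one_eq_id, sub_self]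
    have hdvd : m ∣ d * g - 1 := minpoly.dvd k u hz
    have hre : d * g - 1 = -(c * X ^ a) := by linear_combination hbez
    rw [hre, dvd_neg, hfac] at hdvd
    have hgc : g ∣ c := by
      have : (X : k[X]) ^ a * g ∣ X ^ a * c := by rwa [mul_comm (c : k[X]) _] at hdvd
      exact (mul_dvd_mul_iff_left (pow_ne_zero a Polynomial.X_ne_zero)).mp this
    obtain ⟨c', hc'⟩ := hgc
    have hgu : IsUnit g := IsUnit.of_mul_eq_one (c' * X ^ a + d)
      (by linear_combination hbez - X ^ a * hc')
    obtain ⟨r, hrU, hCr⟩ := Polynomial.isUnit_iff.mp hgu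
    have hr0 : r ≠ 0 := hrU.ne_zero
    have hae2 := hae
    rw [← hm, hfac, ← hCr, map_mul, Polynomial.aeval_X_pow, Polynomial.aeval_C] at hae2
    refine ⟨a, LinearMap.ext fun y => ?_⟩
    have hy := LinearMap.congr_fun hae2 y
    rw [Module.End.mul_apply, Module.algebraMap_end_apply, map_smul] at hy
    rw [LinearMap.zero_apply] at hy ⊢
    exact (smul_eq_zero.mp hy).resolve_left hr0

end Aux


section Aux3
variable {k : Type*} [Field k] {P : Type*}

/-- Split mono onto an indecomposable representation is an isomorphism. -/
theorem split_iso {V W : Type*} [AddCommGroup V] [Module k V] [AddCommGroup W] [Module k W]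
    [Nontrivial V]
    (ψ : P → Submodule k V) (χ : P → Submodule k W)
    (hindec : ∀ U' U'' : Submodule k W, IsCompl U' U'' →
      (∀ p, χ p = (χ p ⊓ U') ⊔ (χ p ⊓ U'')) → U' = ⊥ ∨ U'' = ⊥)
    (h : V →ₗ[k] W) (r : W →ₗ[k] V) (hrh : ∀ x, r (h x) = x)
    (hh : ∀ p, ∀ x ∈ ψ p, h x ∈ χ p) (hr : ∀ p, ∀ y ∈ χ p, r y ∈ ψ p) :
    Function.Bijective h ∧ ∀ p, (ψ p).map h = χ p := by
  set q : W →ₗ[k] W := h ∘ₗ r with hq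
  have hqq : ∀ y, q (q y) = q y := fun y => by
    simp only [hq, LinearMap.comp_apply, hrh]
  have hinj : Function.Injective h := by
    intro x y hxy
    rw [← hrh x, ← hrh y, hxy]
  have hkerq : ∀ y : W, q (y - q y) = 0 := fun y => by simp [map_sub, hqq y]
  have hcompl : IsCompl (LinearMap.range q) (LinearMap.ker q) := by
    constructor
    · rw [disjoint_iff, eq_bot_iff]
      rintro y ⟨⟨z, rfl⟩, hy⟩
      have h0 : q (q z) = 0 := hy
      rw [hqq z] at h0
      simp [h0]
    · rw [codisjoint_iff, eq_top_iff]
      intro y _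
      have hy : y = q y + (y - q y) := by abel
      rw [hy]
      exact Submodule.add_mem_sup ⟨y, rfl⟩ (hkerq y)
  have hdec : ∀ p, χ p = (χ p ⊓ LinearMap.range q) ⊔ (χ p ⊓ LinearMap.ker q) := by
    intro p
    refine le_antisymm (fun y hy => ?_) (sup_le inf_le_left inf_le_left)
    have hy' : y = q y + (y - q y) := by abel
    have hqy : q y ∈ χ p := hh p _ (hr p y hy)
    rw [hy']
    exact Submodule.add_mem_sup ⟨hqy, ⟨y, rfl⟩⟩ ⟨sub_mem hy hqy, hkerq y⟩
  have hrange : LinearMap.range q ≠ ⊥ := by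
    obtain ⟨x, hx⟩ := exists_ne (0 : V)
    intro hbot
    have : q (h x) = h x := by simp only [hq, LinearMap.comp_apply, hrh]
    have hmem : h x ∈ LinearMap.range q := ⟨h x, this⟩
    rw [hbot, Submodule.mem_bot] at hmem
    exact hx (hinj (by rw [hmem, map_zero]))
  have hker : LinearMap.ker q = ⊥ := (hindec _ _ hcompl hdec).resolve_left hrange
  have hqinj : Function.Injective q := LinearMap.ker_eq_bot.mp hker
  have hqid : ∀ y, q y = y := fun y => hqinj (hqq y)
  have hsurj : Function.Surjective h := fun y => ⟨r y, hqid y⟩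
  refine ⟨⟨hinj, hsurj⟩, fun p => le_antisymm ?_ fun y hy => ?_⟩
  · rintro y ⟨x, hx, rfl⟩
    exact hh p x hx
  · exact ⟨r y, hr p y hy, hqid y⟩

variable {V : Type*} [AddCommGroup V] [Module k V] [FiniteDimensional k V]

theorem map_eq_of_bij (S : Submodule k V) (u : V →ₗ[k] V)
    (hinj : Function.Injective u) (hle : S.map u ≤ S) : S.map u = S := by
  apply Submodule.eq_of_le_of_finrank_le hle
  rw [(Submodule.equivMapOfInjective u hinj S).finrank_eq]

end Aux3


section Aux4
variable {k : Type*} [Field k] {P : Type*}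
variable {V : Type*} [AddCommGroup V] [Module k V] [FiniteDimensional k V]

theorem local_endo (ψ : P → Submodule k V)
    (hindec : ∀ U' U'' : Submodule k V, IsCompl U' U'' →
      (∀ p, ψ p = (ψ p ⊓ U') ⊔ (ψ p ⊓ U'')) → U' = ⊥ ∨ U'' = ⊥)
    (u v : V →ₗ[k] V) (hu : ∀ p, ∀ x ∈ ψ p, u x ∈ ψ p)
    (hv : ∀ p, ∀ x ∈ ψ p, v x ∈ ψ p)
    (huv : ∀ x, u x + v x = x) :
    Function.Bijective u ∨ Function.Bijective v := by
  by_cases hb : Function.Injective u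
  · exact Or.inl ⟨hb, (LinearMap.injective_iff_surjective).mp hb⟩
  · obtain ⟨n, hn⟩ := nilpotent_of_not_inj ψ hindec u hu hb
    right
    have hinj : Function.Injective v := by
      rw [← LinearMap.ker_eq_bot, eq_bot_iff]
      intro x hx
      have hvx : v x = 0 := hx
      have hux : u x = x := by have := huv x; rw [hvx, add_zero] at this; exact this
      have hpow : ∀ m : ℕ, (u ^ m) x = x := by
        intro m
        induction m with
        | zero => rfl
        | succ m ih => rw [pow_succ', Module.End.mul_apply, ih, hux]
      have := hpow n
      rw [hn, LinearMap.zero_apply] at this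
      simp [← this]
    exact ⟨hinj, (LinearMap.injective_iff_surjective).mp hinj⟩

theorem dual_indec (invol : P → P) (hsurj : Function.Surjective invol)
    (ψ : P → Submodule k V)
    (hindec : ∀ U' U'' : Submodule k V, IsCompl U' U'' →
      (∀ p, ψ p = (ψ p ⊓ U') ⊔ (ψ p ⊓ U'')) → U' = ⊥ ∨ U'' = ⊥)
    (U' U'' : Submodule k (Module.Dual k V)) (hc : IsCompl U' U'')
    (hdecomp : ∀ p, (ψ (invol p)).dualAnnihilator =
      ((ψ (invol p)).dualAnnihilator ⊓ U') ⊔ ((ψ (invol p)).dualAnnihilator ⊓ U'')) :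
    U' = ⊥ ∨ U'' = ⊥ := by
  set W' := U''.dualCoannihilator with hW'
  set W'' := U'.dualCoannihilator with hW''
  have hWcompl : IsCompl W' W'' := by
    constructor
    · rw [disjoint_iff, eq_bot_iff]
      rintro x ⟨hx', hx''⟩
      rw [Submodule.mem_bot, ← Module.forall_dual_apply_eq_zero_iff k x]
      intro φ
      have hφ : φ ∈ U' ⊔ U'' := by rw [codisjoint_iff.mp hc.codisjoint]; trivial
      obtain ⟨φ', hφ', φ'', hφ'', rfl⟩ := Submodule.mem_sup.mp hφ
      have h1 : φ' x = 0 := Submodule.mem_dualCoannihilator x |>.mp hx'' φ' hφ'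
      have h2 : φ'' x = 0 := Submodule.mem_dualCoannihilator x |>.mp hx' φ'' hφ''
      simp [LinearMap.add_apply, h1, h2]
    · rw [codisjoint_iff]
      have hann : (W' ⊔ W'').dualAnnihilator = ⊥ := by
        rw [Submodule.dualAnnihilator_sup_eq, hW', hW'',
          Subspace.dualCoannihilator_dualAnnihilator_eq,
          Subspace.dualCoannihilator_dualAnnihilator_eq, inf_comm]
        exact disjoint_iff.mp hc.disjoint
      have := congrArg Submodule.dualCoannihilator hann
      rwa [Subspace.dualAnnihilator_dualCoannihilator_eq,
        Submodule.dualCoannihilator_bot] at this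
  have hdec : ∀ q, ψ q = (ψ q ⊓ W') ⊔ (ψ q ⊓ W'') := by
    intro q
    refine le_antisymm (fun x hx => ?_) (sup_le inf_le_left inf_le_left)
    obtain ⟨p, rfl⟩ := hsurj q
    have hxsup : x ∈ W' ⊔ W'' := by rw [codisjoint_iff.mp hWcompl.codisjoint]; trivial
    obtain ⟨x', hx', x'', hx'', hxe⟩ := Submodule.mem_sup.mp hxsup
    have hx'mem : x' ∈ ψ (invol p) := by
      rw [← Subspace.dualAnnihilator_dualCoannihilator_eq (W := ψ (invol p))]
      rw [Submodule.mem_dualCoannihilator]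
      intro φ hφ
      rw [hdecomp p] at hφ
      obtain ⟨φ', hφ', φ'', hφ'', rfl⟩ := Submodule.mem_sup.mp hφ
      have h1 : φ'' x' = 0 := Submodule.mem_dualCoannihilator x' |>.mp hx' φ'' hφ''.2
      have h2 : φ' x'' = 0 := Submodule.mem_dualCoannihilator x'' |>.mp hx'' φ' hφ'.2
      have h3 : φ' x = 0 := Submodule.mem_dualAnnihilator φ' |>.mp hφ'.1 x hx
      have h4 : φ' x' = 0 := by
        have : φ' x = φ' x' + φ' x'' := by rw [← map_add, hxe]
        rw [h3, h2, add_zero] at this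
        exact this.symm
      simp [LinearMap.add_apply, h1, h4]
    have hx''mem : x'' ∈ ψ (invol p) := by
      have : x'' = x - x' := by rw [← hxe]; abel
      rw [this]
      exact sub_mem hx hx'mem
    rw [← hxe]
    exact Submodule.add_mem_sup ⟨hx'mem, hx'⟩ ⟨hx''mem, hx''⟩
  rcases hindec W' W'' hWcompl hdec with h | h
  · left
    have : U'' = ⊤ := by
      have := congrArg Submodule.dualAnnihilator h
      rwa [hW', Subspace.dualCoannihilator_dualAnnihilator_eq,
        Submodule.dualAnnihilator_bot] at this
    have hd := hc.disjoint
    rw [this] at hd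
    exact Or.inl (disjoint_top.mp hd) |>.resolve_right (fun h => h)
  · right
    have : U' = ⊤ := by
      have := congrArg Submodule.dualAnnihilator h
      rwa [hW'', Subspace.dualCoannihilator_dualAnnihilator_eq,
        Submodule.dualAnnihilator_bot] at this
    have hd := hc.disjoint
    rw [this] at hd
    exact (disjoint_comm.mp hd |> disjoint_top.mp)
end Aux4

theorem ann_iff {k V₁ V₂ : Type*} [Field k] [AddCommGroup V₁] [Module k V₁]
    [AddCommGroup V₂] [Module k V₂] (g : V₁ ≃ₗ[k] V₂) (S : Submodule k V₁)
    (η : Module.Dual k V₂) :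
    g.dualMap η ∈ S.dualAnnihilator ↔ η ∈ (S.map (g : V₁ →ₗ[k] V₂)).dualAnnihilator := by
  simp only [Submodule.mem_dualAnnihilator, LinearEquiv.dualMap_apply]
  constructor
  · rintro h y ⟨x, hx, rfl⟩
    exact h x hx
  · intro h x hx
    exact h (g x) ⟨x, hx, rfl⟩

theorem forward_dir
    {k V₁ V₂ P : Type*} [Field k]
    [AddCommGroup V₁] [Module k V₁] [FiniteDimensional k V₁]
    [AddCommGroup V₂] [Module k V₂] [FiniteDimensional k V₂]
    [PartialOrder P]
    (invol : P → P) (hinv : Function.Involutive invol)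
    (ψ₁ : P → Submodule k V₁)
    (ψ₂ : P → Submodule k V₂)
    (hyp : (∃ g : V₁ ≃ₗ[k] V₂, ∀ p, (ψ₁ p).map (g : V₁ →ₗ[k] V₂) = ψ₂ p) ∨
      (∃ g : V₁ ≃ₗ[k] Module.Dual k V₂, ∀ p,
        (ψ₁ p).map (g : V₁ →ₗ[k] Module.Dual k V₂) = (ψ₂ (invol p)).dualAnnihilator)) :
    (∃ F : (Module.Dual k V₁ × V₁) ≃ₗ[k] (Module.Dual k V₂ × V₂),
        (∀ a b : Module.Dual k V₁ × V₁,
          OmegaForm k V₂ (F a) (F b) = OmegaForm k V₁ a b) ∧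
        ∀ p, ((ψ₁ (invol p)).dualAnnihilator.prod (ψ₁ p)).map
            (F : (Module.Dual k V₁ × V₁) →ₗ[k] (Module.Dual k V₂ × V₂)) =
          (ψ₂ (invol p)).dualAnnihilator.prod (ψ₂ p)) := by
  rcases hyp with ⟨g, hg⟩ | ⟨g, hg⟩
  · -- case ψ₁ ≅ ψ₂
    refine ⟨(g.symm.dualMap).prodCongr g, ?_, ?_⟩
    · intro a b
      simp only [OmegaForm_apply, LinearEquiv.prodCongr_apply, LinearEquiv.dualMap_apply,
        LinearEquiv.symm_apply_apply]
    · intro p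
      ext w
      rw [Submodule.mem_map_equiv, LinearEquiv.prodCongr_symm, LinearEquiv.prodCongr_apply]
      simp only [Submodule.mem_prod]
      have h1 : (g.symm.dualMap).symm w.1 ∈ (ψ₁ (invol p)).dualAnnihilator ↔
          w.1 ∈ (ψ₂ (invol p)).dualAnnihilator := by
        have : (g.symm.dualMap).symm = g.dualMap := by
          rw [LinearEquiv.dualMap_symm, LinearEquiv.symm_symm]
        rw [this, ann_iff g, hg (invol p)]
      have h2 : g.symm w.2 ∈ ψ₁ p ↔ w.2 ∈ ψ₂ p := by
        rw [← hg p, Submodule.mem_map_equiv]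
      rw [h1, h2]
  · -- case ψ₁ ≅ ψ₂*
    set u : V₂ ≃ₗ[k] Module.Dual k V₁ := (Module.evalEquiv k V₂).trans g.dualMap with hu_def
    have hu_apply : ∀ (y : V₂) (x : V₁), (u y) x = (g x) y := fun y x => rfl
    have key : ∀ (x : V₁) (η : Module.Dual k V₁), (g x) (u.symm η) = η x := by
      intro x η
      rw [← hu_apply (u.symm η) x, u.apply_symm_apply]
    have hann : ∀ p, (ψ₂ p).map (u : V₂ →ₗ[k] Module.Dual k V₁) =
        (ψ₁ (invol p)).dualAnnihilator := by
      intro p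
      apply le_antisymm
      · rintro _ ⟨y, hy, rfl⟩
        rw [Submodule.mem_dualAnnihilator]
        intro x hx
        show (g x) y = 0
        have hgx : g x ∈ (ψ₂ (invol (invol p))).dualAnnihilator := by
          rw [← hg (invol p)]
          exact Submodule.mem_map_of_mem hx
        rw [hinv p] at hgx
        exact (Submodule.mem_dualAnnihilator _).mp hgx y hy
      · intro ξ hξ
        refine ⟨u.symm ξ, ?_, u.apply_symm_apply ξ⟩
        show u.symm ξ ∈ ψ₂ p
        rw [show ψ₂ p = (ψ₂ p).dualAnnihilator.dualCoannihilator from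
          (Subspace.dualAnnihilator_dualCoannihilator_eq).symm,
          Submodule.mem_dualCoannihilator]
        intro φ hφ
        have hφ' : φ ∈ (ψ₁ (invol p)).map (g : V₁ →ₗ[k] Module.Dual k V₂) := by
          rw [hg (invol p), hinv p]
          exact hφ
        obtain ⟨x, hx, rfl⟩ := hφ'
        exact (key x ξ).trans ((Submodule.mem_dualAnnihilator _).mp hξ x hx)
    set F : (Module.Dual k V₁ × V₁) ≃ₗ[k] (Module.Dual k V₂ × V₂) :=
      (LinearEquiv.prodComm k (Module.Dual k V₁) V₁).trans
        (g.prodCongr (u.symm.trans (LinearEquiv.neg k))) with hF_def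
    have hF_apply : ∀ z : Module.Dual k V₁ × V₁, F z = (g z.2, -(u.symm z.1)) := by
      intro z
      simp [hF_def, LinearEquiv.prodCongr_apply, LinearEquiv.neg_apply]
    have hFsymm : ∀ w : Module.Dual k V₂ × V₂, F.symm w = (-(u w.2), g.symm w.1) := by
      intro w
      apply F.injective
      rw [F.apply_symm_apply, hF_apply]
      simp
    refine ⟨F, ?_, ?_⟩
    · intro a b
      simp only [OmegaForm_apply, hF_apply, map_neg, key]
      ring
    · intro p
      ext w
      rw [Submodule.mem_map_equiv, hFsymm]
      simp only [Submodule.mem_prod]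
      have h1 : -(u w.2) ∈ (ψ₁ (invol p)).dualAnnihilator ↔ w.2 ∈ ψ₂ p := by
        rw [neg_mem_iff, ← hann p, Submodule.mem_map_equiv, u.symm_apply_apply]
      have h2 : g.symm w.1 ∈ ψ₁ p ↔ w.1 ∈ (ψ₂ (invol p)).dualAnnihilator := by
        rw [← hg p, Submodule.mem_map_equiv]
      rw [h1, h2, and_comm]

theorem reverse_dir
    {k V₁ V₂ P : Type*} [Field k]
    [AddCommGroup V₁] [Module k V₁] [FiniteDimensional k V₁] [Nontrivial V₁]
    [AddCommGroup V₂] [Module k V₂] [FiniteDimensional k V₂] [Nontrivial V₂]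
    [PartialOrder P]
    (invol : P → P) (hinv : Function.Involutive invol)
    (ψ₁ : P → Submodule k V₁)
    (ψ₂ : P → Submodule k V₂)
    (hindec₁ : ∀ U' U'' : Submodule k V₁, IsCompl U' U'' →
      (∀ p, ψ₁ p = (ψ₁ p ⊓ U') ⊔ (ψ₁ p ⊓ U'')) → U' = ⊥ ∨ U'' = ⊥)
    (hindec₂ : ∀ U' U'' : Submodule k V₂, IsCompl U' U'' →
      (∀ p, ψ₂ p = (ψ₂ p ⊓ U') ⊔ (ψ₂ p ⊓ U'')) → U' = ⊥ ∨ U'' = ⊥)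
    (F : (Module.Dual k V₁ × V₁) ≃ₗ[k] (Module.Dual k V₂ × V₂))
    (hF : ∀ p, ((ψ₁ (invol p)).dualAnnihilator.prod (ψ₁ p)).map
            (F : (Module.Dual k V₁ × V₁) →ₗ[k] (Module.Dual k V₂ × V₂)) =
          (ψ₂ (invol p)).dualAnnihilator.prod (ψ₂ p)) :
    ((∃ g : V₁ ≃ₗ[k] V₂, ∀ p, (ψ₁ p).map (g : V₁ →ₗ[k] V₂) = ψ₂ p) ∨
      (∃ g : V₁ ≃ₗ[k] Module.Dual k V₂, ∀ p,
        (ψ₁ p).map (g : V₁ →ₗ[k] Module.Dual k V₂) = (ψ₂ (invol p)).dualAnnihilator)) := by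
  classical
  set χ : P → Submodule k (Module.Dual k V₂) := fun p => (ψ₂ (invol p)).dualAnnihilator with hχ
  -- component maps
  set e : V₁ →ₗ[k] V₂ :=
    (LinearMap.snd k (Module.Dual k V₂) V₂) ∘ₗ (F : (Module.Dual k V₁ × V₁) →ₗ[k] _) ∘ₗ
      (LinearMap.inr k (Module.Dual k V₁) V₁) with he_def
  set aM : V₁ →ₗ[k] Module.Dual k V₂ :=
    (LinearMap.fst k (Module.Dual k V₂) V₂) ∘ₗ (F : (Module.Dual k V₁ × V₁) →ₗ[k] _) ∘ₗ
      (LinearMap.inr k (Module.Dual k V₁) V₁) with haM_def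
  set r : V₂ →ₗ[k] V₁ :=
    (LinearMap.snd k (Module.Dual k V₁) V₁) ∘ₗ (F.symm : (Module.Dual k V₂ × V₂) →ₗ[k] _) ∘ₗ
      (LinearMap.inr k (Module.Dual k V₂) V₂) with hr_def
  set s : Module.Dual k V₂ →ₗ[k] V₁ :=
    (LinearMap.snd k (Module.Dual k V₁) V₁) ∘ₗ (F.symm : (Module.Dual k V₂ × V₂) →ₗ[k] _) ∘ₗ
      (LinearMap.inl k (Module.Dual k V₂) V₂) with hs_def
  -- preservation facts
  have hmemF : ∀ p, ∀ x ∈ ψ₁ p, F (0, x) ∈ ((ψ₂ (invol p)).dualAnnihilator.prod (ψ₂ p)) := by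
    intro p x hx
    rw [← hF p]
    exact Submodule.mem_map_of_mem ⟨Submodule.zero_mem _, hx⟩
  have he : ∀ p, ∀ x ∈ ψ₁ p, e x ∈ ψ₂ p := fun p x hx => (hmemF p x hx).2
  have haM : ∀ p, ∀ x ∈ ψ₁ p, aM x ∈ χ p := fun p x hx => (hmemF p x hx).1
  have hr : ∀ p, ∀ y ∈ ψ₂ p, r y ∈ ψ₁ p := by
    intro p y hy
    have hmem : ((0 : Module.Dual k V₂), y) ∈ (ψ₂ (invol p)).dualAnnihilator.prod (ψ₂ p) :=
      ⟨Submodule.zero_mem _, hy⟩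
    rw [← hF p, Submodule.mem_map_equiv] at hmem
    exact hmem.2
  have hs : ∀ p, ∀ ξ ∈ χ p, s ξ ∈ ψ₁ p := by
    intro p ξ hξ
    have hmem : (ξ, (0 : V₂)) ∈ (ψ₂ (invol p)).dualAnnihilator.prod (ψ₂ p) :=
      ⟨hξ, Submodule.zero_mem _⟩
    rw [← hF p, Submodule.mem_map_equiv] at hmem
    exact hmem.2
  -- the identity r ∘ e + s ∘ aM = id
  have hid : ∀ x, r (e x) + s (aM x) = x := by
    intro x
    have h2 : F (0, x) = (aM x, e x) := rfl
    have h3 : ((aM x, e x) : Module.Dual k V₂ × V₂) = (aM x, 0) + (0, e x) := by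
      simp
    have h1 : ((0 : Module.Dual k V₁), x) = F.symm (aM x, 0) + F.symm (0, e x) := by
      rw [← map_add, ← h3, ← h2, F.symm_apply_apply]
    have h4 := congrArg Prod.snd h1
    rw [show r (e x) + s (aM x) = (F.symm (0, e x)).2 + (F.symm (aM x, 0)).2 from rfl]
    simpa [add_comm] using h4.symm
  set u : V₁ →ₗ[k] V₁ := r ∘ₗ e with hu_def
  set v : V₁ →ₗ[k] V₁ := s ∘ₗ aM with hv_def
  have hu : ∀ p, ∀ x ∈ ψ₁ p, u x ∈ ψ₁ p := fun p x hx => hr p _ (he p x hx)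
  have hv : ∀ p, ∀ x ∈ ψ₁ p, v x ∈ ψ₁ p := fun p x hx => hs p _ (haM p x hx)
  rcases local_endo ψ₁ hindec₁ u v hu hv hid with hbij | hbij
  · -- ψ₁ ≅ ψ₂
    left
    set ue := LinearEquiv.ofBijective u hbij with hue
    have hueinv : ∀ p, ∀ z ∈ ψ₁ p, ue.symm z ∈ ψ₁ p := by
      intro p z hz
      have hmap : (ψ₁ p).map u = ψ₁ p :=
        map_eq_of_bij (ψ₁ p) u hbij.injective
          (fun z ⟨w, hw, hwz⟩ => hwz ▸ hu p w hw)
      rw [← hmap] at hz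
      obtain ⟨w, hw, hwz⟩ := hz
      have : ue.symm z = w := by
        rw [LinearEquiv.symm_apply_eq]
        exact hwz.symm
      rwa [this]
    set r' : V₂ →ₗ[k] V₁ := (ue.symm : V₁ →ₗ[k] V₁) ∘ₗ r with hr'
    have hr'h : ∀ x, r' (e x) = x := by
      intro x
      have : r (e x) = ue x := rfl
      simp only [hr', LinearMap.comp_apply, this]
      exact ue.symm_apply_apply x
    have hr'p : ∀ p, ∀ y ∈ ψ₂ p, r' y ∈ ψ₁ p := fun p y hy =>
      hueinv p _ (hr p y hy)
    obtain ⟨hbij_e, hmap_e⟩ := split_iso ψ₁ ψ₂ hindec₂ e r' hr'h he hr'p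
    exact ⟨LinearEquiv.ofBijective e hbij_e, fun p => hmap_e p⟩
  · -- ψ₁ ≅ ψ₂*
    right
    have hnt : Nontrivial (Module.Dual k V₂) := by
      obtain ⟨y, hy⟩ := exists_ne (0 : V₂)
      have : ¬ (∀ φ : Module.Dual k V₂, φ y = 0) := by
        rw [Module.forall_dual_apply_eq_zero_iff k y]
        exact hy
      push_neg at this
      obtain ⟨φ, hφ⟩ := this
      exact ⟨φ, 0, fun h => hφ (by rw [h]; rfl)⟩
    have hindecχ : ∀ U' U'' : Submodule k (Module.Dual k V₂), IsCompl U' U'' →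
        (∀ p, χ p = (χ p ⊓ U') ⊔ (χ p ⊓ U'')) → U' = ⊥ ∨ U'' = ⊥ := by
      intro U' U'' hc hd
      exact dual_indec invol hinv.surjective ψ₂ hindec₂ U' U'' hc hd
    set ve := LinearEquiv.ofBijective v hbij with hve
    have hveinv : ∀ p, ∀ z ∈ ψ₁ p, ve.symm z ∈ ψ₁ p := by
      intro p z hz
      have hmap : (ψ₁ p).map v = ψ₁ p :=
        map_eq_of_bij (ψ₁ p) v hbij.injective
          (fun z ⟨w, hw, hwz⟩ => hwz ▸ hv p w hw)
      rw [← hmap] at hz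
      obtain ⟨w, hw, hwz⟩ := hz
      have : ve.symm z = w := by
        rw [LinearEquiv.symm_apply_eq]
        exact hwz.symm
      rwa [this]
    set s' : Module.Dual k V₂ →ₗ[k] V₁ := (ve.symm : V₁ →ₗ[k] V₁) ∘ₗ s with hs'
    have hs'h : ∀ x, s' (aM x) = x := by
      intro x
      have : s (aM x) = ve x := rfl
      simp only [hs', LinearMap.comp_apply, this]
      exact ve.symm_apply_apply x
    have hs'p : ∀ p, ∀ ξ ∈ χ p, s' ξ ∈ ψ₁ p := fun p ξ hξ =>
      hveinv p _ (hs p ξ hξ)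
    obtain ⟨hbij_a, hmap_a⟩ := split_iso ψ₁ χ hindecχ aM s' hs'h haM hs'p
    exact ⟨LinearEquiv.ofBijective aM hbij_a, fun p => hmap_a p⟩

/-- Let `ψ₁`, `ψ₂` be indecomposable linear representations of a poset
with order-reversing involution `(P, ⊥)` over a field of characteristic `≠ 2`.  Then
`ψ₁ ≅ ψ₂` or `ψ₁ ≅ ψ₂*` if and only if the symplectifications `ψ₁⁻` and `ψ₂⁻` are
isomorphic as symplectic representations. -/
theorem symplectifications_isomorphic_iff_iso_or_dual
    {k V₁ V₂ P : Type*} [Field k]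
    [AddCommGroup V₁] [Module k V₁] [FiniteDimensional k V₁] [Nontrivial V₁]
    [AddCommGroup V₂] [Module k V₂] [FiniteDimensional k V₂] [Nontrivial V₂]
    [PartialOrder P] (h2 : (2 : k) ≠ 0)
    (invol : P → P) (hinv : Function.Involutive invol) (hanti : Antitone invol)
    (ψ₁ : P → Submodule k V₁) (hmono₁ : Monotone ψ₁)
    (ψ₂ : P → Submodule k V₂) (hmono₂ : Monotone ψ₂)
    (hindec₁ : ∀ U' U'' : Submodule k V₁, IsCompl U' U'' →
      (∀ p, ψ₁ p = (ψ₁ p ⊓ U') ⊔ (ψ₁ p ⊓ U'')) → U' = ⊥ ∨ U'' = ⊥)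
    (hindec₂ : ∀ U' U'' : Submodule k V₂, IsCompl U' U'' →
      (∀ p, ψ₂ p = (ψ₂ p ⊓ U') ⊔ (ψ₂ p ⊓ U'')) → U' = ⊥ ∨ U'' = ⊥) :
    ((∃ g : V₁ ≃ₗ[k] V₂, ∀ p, (ψ₁ p).map (g : V₁ →ₗ[k] V₂) = ψ₂ p) ∨
      (∃ g : V₁ ≃ₗ[k] Module.Dual k V₂, ∀ p,
        (ψ₁ p).map (g : V₁ →ₗ[k] Module.Dual k V₂) = (ψ₂ (invol p)).dualAnnihilator))
    ↔ (∃ F : (Module.Dual k V₁ × V₁) ≃ₗ[k] (Module.Dual k V₂ × V₂),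
        (∀ a b : Module.Dual k V₁ × V₁,
          OmegaForm k V₂ (F a) (F b) = OmegaForm k V₁ a b) ∧
        ∀ p, ((ψ₁ (invol p)).dualAnnihilator.prod (ψ₁ p)).map
            (F : (Module.Dual k V₁ × V₁) →ₗ[k] (Module.Dual k V₂ × V₂)) =
          (ψ₂ (invol p)).dualAnnihilator.prod (ψ₂ p)) := by
  constructor
  · intro hyp
    exact forward_dir invol hinv ψ₁ ψ₂ hyp
  · rintro ⟨F, _, hF⟩
    exact reverse_dir invol hinv ψ₁ ψ₂ hindec₁ hindec₂ F hF
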